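/- Fix e₁ ∈ ℂ and define, on the quadratic grid, the operators U = M₁ + e₁L, V = M₂ + e₁M₁ + ½e₁²L, Y = L, and R = R₂ + (2e₁−3)R₁ + ½(3e₁²−10e₁+4)M₂ + ½(e₁+1)(e₁²−4e₁+2)M₁ + ⅛(e₁⁴−4e₁³−8e₁²+24e₁−8)L. Then these operators satisfy, pointwise at every x ∈ ℂ with all arising denominators nonzero, the relations [V,Y] = −{U,Y}, [U,Y] = −{Y,Y}, [U,V] = {V,Y} − 2{Y,Y}, [R,Y] = {U,U} − {U,V} + {V,Y}, [R,V] = 2{V,Y} − {Y,Y} − {V,V} − {U,R}, [R,U] = {U,V} + 2{V,Y} − 2{U,Y} − {V,V} − {Y,Y} − {R,Y}; moreover in this realization the central elements take the values Q₁ = U² − {V,Y} + 3Y² = Id and Q₂ = U² + V² − {U,V} − {U,Y} − {R,Y} = (e₁−2)(e₁−4)·Id. -/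

import Mathlib

set_option maxHeartbeats 2000000


noncomputable section

/-- The S–Heun lowering operator L on the quadratic grid λ_x = x². -/
def opL (f : ℂ → ℂ) : ℂ → ℂ := fun x => (f (x + 1) - f (x - 1)) / (4 * x)

/-- The stabilizing S–Heun operator M₁ on the quadratic grid. -/
def opM1 (f : ℂ → ℂ) : ℂ → ℂ :=
  fun x => ((2 * x - 1) * f (x + 1) + (2 * x + 1) * f (x - 1)) / (4 * x)

/-- The stabilizing S–Heun operator M₂ on the quadratic grid. -/
def opM2 (f : ℂ → ℂ) : ℂ → ℂ :=
  fun x => ((x ^ 2 + (x - 1) ^ 2) * f (x + 1) - ((x + 1) ^ 2 + x ^ 2) * f (x - 1)) / (4 * x)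

/-- The raising S–Heun operator R₁ = λ_x M₁ on the quadratic grid. -/
def opR1 (f : ℂ → ℂ) : ℂ → ℂ := fun x => x ^ 2 * opM1 f x

/-- The raising S–Heun operator R₂ = λ_x M₂ on the quadratic grid. -/
def opR2 (f : ℂ → ℂ) : ℂ → ℂ := fun x => x ^ 2 * opM2 f x

/-- U = M₁ + e₁L. -/
def oU (e₁ : ℂ) (f : ℂ → ℂ) : ℂ → ℂ := fun x => opM1 f x + e₁ * opL f x

/-- V = M₂ + e₁M₁ + ½e₁²L. -/
def oV (e₁ : ℂ) (f : ℂ → ℂ) : ℂ → ℂ :=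
  fun x => opM2 f x + e₁ * opM1 f x + (e₁ ^ 2 / 2) * opL f x

/-- Y = L. -/
def oY (f : ℂ → ℂ) : ℂ → ℂ := opL f

/-- R = R₂ + (2e₁−3)R₁ + ½(3e₁²−10e₁+4)M₂ + ½(e₁+1)(e₁²−4e₁+2)M₁
      + ⅛(e₁⁴−4e₁³−8e₁²+24e₁−8)L. -/
def oR (e₁ : ℂ) (f : ℂ → ℂ) : ℂ → ℂ := fun x =>
  opR2 f x + (2 * e₁ - 3) * opR1 f x + ((3 * e₁ ^ 2 - 10 * e₁ + 4) / 2) * opM2 f x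
    + ((e₁ + 1) * (e₁ ^ 2 - 4 * e₁ + 2) / 2) * opM1 f x
    + ((e₁ ^ 4 - 4 * e₁ ^ 3 - 8 * e₁ ^ 2 + 24 * e₁ - 8) / 8) * opL f x

/-- the operators U, V, Y, R built from the S–Heun operators on
the quadratic grid realize the defining relations of 𝔰𝔱𝔞𝔟*, with Casimirs
Q₁ = Id and Q₂ = (e₁−2)(e₁−4)·Id. -/
lemma oY_eval (f : ℂ → ℂ) (y : ℂ) :
    oY f y = (1 * f (y + 1) + (-1) * f (y - 1)) / (4 * y) := by
  simp only [oY, opL]; ring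

lemma oU_eval (e₁ : ℂ) (f : ℂ → ℂ) (y : ℂ) :
    oU e₁ f y = ((2 * y - 1 + e₁) * f (y + 1) + (2 * y + 1 - e₁) * f (y - 1)) / (4 * y) := by
  simp only [oU, opM1, opL]; ring

lemma oV_eval (e₁ : ℂ) (f : ℂ → ℂ) (y : ℂ) :
    oV e₁ f y = ((y ^ 2 + (y - 1) ^ 2 + e₁ * (2 * y - 1) + e₁ ^ 2 / 2) * f (y + 1)
      + (-((y + 1) ^ 2 + y ^ 2) + e₁ * (2 * y + 1) - e₁ ^ 2 / 2) * f (y - 1)) / (4 * y) := by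
  simp only [oV, opM2, opM1, opL]; ring

lemma oR_eval (e₁ : ℂ) (f : ℂ → ℂ) (y : ℂ) :
    oR e₁ f y = (((y ^ 2 + (3 * e₁ ^ 2 - 10 * e₁ + 4) / 2) * (y ^ 2 + (y - 1) ^ 2)
        + ((2 * e₁ - 3) * y ^ 2 + (e₁ + 1) * (e₁ ^ 2 - 4 * e₁ + 2) / 2) * (2 * y - 1)
        + (e₁ ^ 4 - 4 * e₁ ^ 3 - 8 * e₁ ^ 2 + 24 * e₁ - 8) / 8) * f (y + 1)
      + (-((y ^ 2 + (3 * e₁ ^ 2 - 10 * e₁ + 4) / 2) * ((y + 1) ^ 2 + y ^ 2))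
        + ((2 * e₁ - 3) * y ^ 2 + (e₁ + 1) * (e₁ ^ 2 - 4 * e₁ + 2) / 2) * (2 * y + 1)
        - (e₁ ^ 4 - 4 * e₁ ^ 3 - 8 * e₁ ^ 2 + 24 * e₁ - 8) / 8) * f (y - 1)) / (4 * y) := by
  simp only [oR, opR2, opR1, opM2, opM1, opL]; ring

lemma key (x : ℂ) (hx0 : x ≠ 0) (hx1 : x - 1 ≠ 0) (hx2 : x + 1 ≠ 0) (p q np nm : ℂ) :
    (p * (np / (4 * (x + 1))) + q * (nm / (4 * (x - 1)))) / (4 * x)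
      = (p * np * (x - 1) + q * nm * (x + 1)) / (16 * (x * (x + 1) * (x - 1))) := by
  field_simp
  ring

theorem stmt15 (e₁ : ℂ) (f : ℂ → ℂ) (x : ℂ) (hx : x * (x - 1) * (x + 1) ≠ 0) :
    (oV e₁ (oY f) x - oY (oV e₁ f) x = -(oU e₁ (oY f) x + oY (oU e₁ f) x)) ∧
    (oU e₁ (oY f) x - oY (oU e₁ f) x = -(oY (oY f) x + oY (oY f) x)) ∧
    (oU e₁ (oV e₁ f) x - oV e₁ (oU e₁ f) x
      = (oV e₁ (oY f) x + oY (oV e₁ f) x) - 2 * (oY (oY f) x + oY (oY f) x)) ∧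
    (oR e₁ (oY f) x - oY (oR e₁ f) x
      = (oU e₁ (oU e₁ f) x + oU e₁ (oU e₁ f) x)
        - (oU e₁ (oV e₁ f) x + oV e₁ (oU e₁ f) x)
        + (oV e₁ (oY f) x + oY (oV e₁ f) x)) ∧
    (oR e₁ (oV e₁ f) x - oV e₁ (oR e₁ f) x
      = 2 * (oV e₁ (oY f) x + oY (oV e₁ f) x) - (oY (oY f) x + oY (oY f) x)
        - (oV e₁ (oV e₁ f) x + oV e₁ (oV e₁ f) x)
        - (oU e₁ (oR e₁ f) x + oR e₁ (oU e₁ f) x)) ∧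
    (oR e₁ (oU e₁ f) x - oU e₁ (oR e₁ f) x
      = (oU e₁ (oV e₁ f) x + oV e₁ (oU e₁ f) x)
        + 2 * (oV e₁ (oY f) x + oY (oV e₁ f) x)
        - 2 * (oU e₁ (oY f) x + oY (oU e₁ f) x)
        - (oV e₁ (oV e₁ f) x + oV e₁ (oV e₁ f) x)
        - (oY (oY f) x + oY (oY f) x)
        - (oR e₁ (oY f) x + oY (oR e₁ f) x)) ∧
    (oU e₁ (oU e₁ f) x - (oV e₁ (oY f) x + oY (oV e₁ f) x) + 3 * oY (oY f) x = f x) ∧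
    (oU e₁ (oU e₁ f) x + oV e₁ (oV e₁ f) x - (oU e₁ (oV e₁ f) x + oV e₁ (oU e₁ f) x)
        - (oU e₁ (oY f) x + oY (oU e₁ f) x) - (oR e₁ (oY f) x + oY (oR e₁ f) x)
      = (e₁ - 2) * (e₁ - 4) * f x) := by
  obtain ⟨hx0, hx1, hx2⟩ : x ≠ 0 ∧ x - 1 ≠ 0 ∧ x + 1 ≠ 0 := by
    refine ⟨fun h => hx ?_, fun h => hx ?_, fun h => hx ?_⟩ <;> rw [h] <;> ring
  have hD : (16 : ℂ) * (x * (x + 1) * (x - 1)) ≠ 0 :=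
    mul_ne_zero (by norm_num) (mul_ne_zero (mul_ne_zero hx0 hx2) hx1)
  refine ⟨?_, ?_, ?_, ?_, ?_, ?_, ?_, ?_⟩ <;>
    · simp only [oY_eval, oU_eval, oV_eval, oR_eval, key x hx0 hx1 hx2,
        show x + 1 - 1 = x from by ring, show x - 1 + 1 = x from by ring,
        show x + 1 + 1 = x + 2 from by ring, show x - 1 - 1 = x - 2 from by ring]
      simp only [← add_div, div_sub_div_same, ← neg_div, ← mul_div_assoc]
      first
        | (rw [div_eq_div_iff hD hD]; ring)
        | (rw [div_eq_iff hD]; ring)
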